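/- Let Ĥ be a self-adjoint operator on an n-dimensional complex inner product space H with eigenvalues E₀ ≤ E₁ ≤ ⋯ ≤ E_{n-1} (counted with multiplicity), let m ≤ n, and let 𝐇 = Σ_{k=1}^m 1⊗⋯⊗Ĥ⊗⋯⊗1 (with Ĥ in the k-th factor) act on H^{⊗m}. Then the antisymmetric subspace V₋(H^{⊗m}) = { x ∈ H^{⊗m} : P_σ x = sgn(σ) x for all σ ∈ S_m } is invariant under 𝐇, and the smallest eigenvalue of the restriction of 𝐇 to V₋(H^{⊗m}) equals Σ_{k=0}^{m-1} E_k; moreover this eigenvalue is attained at the determinant state S₋(v₀⊗⋯⊗v_{m-1}) built from an orthonormal family v₀,…,v_{m-1} of eigenvectors of Ĥ for the eigenvalues E₀,…,E_{m-1}. -/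

import Mathlib

open scoped TensorProduct InnerProductSpace

/-- The permutation operator `P_σ` on the `m`-fold tensor power, acting on elementary
tensors by `P_σ (x₁ ⊗ ⋯ ⊗ x_m) = x_{σ⁻¹(1)} ⊗ ⋯ ⊗ x_{σ⁻¹(m)}`. -/
noncomputable def permOp {H : Type*} [AddCommGroup H] [Module ℂ H] {m : ℕ}
    (σ : Equiv.Perm (Fin m)) :
    (⨂[ℂ] _ : Fin m, H) →ₗ[ℂ] ⨂[ℂ] _ : Fin m, H :=
  (PiTensorProduct.reindex ℂ (fun _ : Fin m => H) σ).toLinearMap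

/-- The antisymmetrizer `S₋ = (1/m!) Σ_σ sgn(σ) P_σ`. -/
noncomputable def antisymmetrizer (H : Type*) [AddCommGroup H] [Module ℂ H] (m : ℕ) :
    (⨂[ℂ] _ : Fin m, H) →ₗ[ℂ] ⨂[ℂ] _ : Fin m, H :=
  (m.factorial : ℂ)⁻¹ • ∑ σ : Equiv.Perm (Fin m), (((Equiv.Perm.sign σ : ℤ) : ℂ)) • permOp σ

/-- The determinant state `|φ_A⟩ = S₋ (φ₁ ⊗ ⋯ ⊗ φ_m)` of a family `φ₁, …, φ_m`. -/
noncomputable def detState {H : Type*} [AddCommGroup H] [Module ℂ H] {m : ℕ}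
    (φ : Fin m → H) : ⨂[ℂ] _ : Fin m, H :=
  antisymmetrizer H m (PiTensorProduct.tprod ℂ φ)

/-- The generalization `𝐇 = Σ_{k=1}^m 1 ⊗ ⋯ ⊗ Ĥ ⊗ ⋯ ⊗ 1` (with `Ĥ` in the `k`-th tensor
factor) of an operator `Ĥ` on `H` to an operator on `H^{⊗m}`. -/
noncomputable def bigOp {H : Type*} [AddCommGroup H] [Module ℂ H] {m : ℕ}
    (T : H →ₗ[ℂ] H) :
    (⨂[ℂ] _ : Fin m, H) →ₗ[ℂ] ⨂[ℂ] _ : Fin m, H :=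
  ∑ k : Fin m, PiTensorProduct.map (fun i : Fin m => if i = k then T else LinearMap.id)

/-- Membership in the antisymmetric subspace `V₋(H^{⊗m})`:
`x ∈ V₋ ↔ P_σ x = sgn(σ) • x` for all permutations `σ`. -/
def IsAntisymmetric {H : Type*} [AddCommGroup H] [Module ℂ H] {m : ℕ}
    (x : ⨂[ℂ] _ : Fin m, H) : Prop :=
  ∀ σ : Equiv.Perm (Fin m), permOp σ x = (((Equiv.Perm.sign σ : ℤ) : ℂ)) • x

section basic
variable {H : Type*} [AddCommGroup H] [Module ℂ H] {m : ℕ}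

theorem permOp_tprod (σ : Equiv.Perm (Fin m)) (x : Fin m → H) :
    permOp σ (PiTensorProduct.tprod ℂ x) = PiTensorProduct.tprod ℂ (fun i => x (σ.symm i)) := by
  simp [permOp, PiTensorProduct.reindex_tprod]

theorem permOp_permOp (σ τ : Equiv.Perm (Fin m)) (x : ⨂[ℂ] _ : Fin m, H) :
    permOp σ (permOp τ x) = permOp (σ * τ) x := by
  have : (permOp σ).comp (permOp τ) = (permOp (σ * τ) : (⨂[ℂ] _ : Fin m, H) →ₗ[ℂ] _) := by
    apply PiTensorProduct.ext
    ext y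
    simp [permOp_tprod, Equiv.Perm.mul_def, Equiv.symm_trans_apply]
  exact congrFun (congrArg DFunLike.coe this) x

theorem bigOp_tprod (T : H →ₗ[ℂ] H) (x : Fin m → H) :
    bigOp T (PiTensorProduct.tprod ℂ x)
      = ∑ k : Fin m, PiTensorProduct.tprod ℂ (fun i => if i = k then T (x i) else x i) := by
  simp only [bigOp, LinearMap.sum_apply, PiTensorProduct.map_tprod]
  refine Finset.sum_congr rfl fun k _ => ?_
  congr 1; funext i
  by_cases h : i = k <;> simp [h]

theorem permOp_bigOp (σ : Equiv.Perm (Fin m)) (T : H →ₗ[ℂ] H) (x : ⨂[ℂ] _ : Fin m, H) :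
    permOp σ (bigOp T x) = bigOp T (permOp σ x) := by
  have : (permOp σ).comp (bigOp T) = ((bigOp T).comp (permOp σ) :
      (⨂[ℂ] _ : Fin m, H) →ₗ[ℂ] _) := by
    apply PiTensorProduct.ext
    ext y
    simp only [LinearMap.compMultilinearMap_apply, LinearMap.comp_apply, bigOp_tprod,
      permOp_tprod, map_sum]
    conv_rhs => rw [← Equiv.sum_comp σ]
    refine Finset.sum_congr rfl fun k _ => ?_
    congr 1; funext i
    by_cases h : Equiv.symm σ i = k
    · rw [if_pos h, if_pos (by rw [← h]; simp), h]
    · rw [if_neg h, if_neg (by intro hc; apply h; rw [hc]; simp)]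
  exact congrFun (congrArg DFunLike.coe this) x

theorem antisymmetrizer_apply (x : ⨂[ℂ] _ : Fin m, H) :
    antisymmetrizer H m x = (m.factorial : ℂ)⁻¹ •
      ∑ σ : Equiv.Perm (Fin m), (((Equiv.Perm.sign σ : ℤ) : ℂ)) • permOp σ x := by
  simp [antisymmetrizer]

theorem permOp_antisymmetrizer (τ : Equiv.Perm (Fin m)) (x : ⨂[ℂ] _ : Fin m, H) :
    permOp τ (antisymmetrizer H m x)
      = (((Equiv.Perm.sign τ : ℤ) : ℂ)) • antisymmetrizer H m x := by
  have h2 : ((Equiv.Perm.sign τ : ℤ) : ℂ) * ((Equiv.Perm.sign τ : ℤ) : ℂ) = 1 := by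
    have : (Equiv.Perm.sign τ : ℤ) * (Equiv.Perm.sign τ : ℤ) = 1 := by
      rcases Int.units_eq_one_or (Equiv.Perm.sign τ) with h | h <;> simp [h]
    exact_mod_cast this
  simp only [antisymmetrizer_apply, map_smul, map_sum]
  rw [smul_comm]
  congr 1
  rw [Finset.smul_sum]
  refine Fintype.sum_equiv (Equiv.mulLeft τ) _ _ (fun σ => ?_)
  simp only [map_smul, permOp_permOp, Equiv.coe_mulLeft, smul_smul]
  congr 1
  have h1 : (((Equiv.Perm.sign (τ * σ) : ℤ)) : ℂ)
      = ((Equiv.Perm.sign τ : ℤ) : ℂ) * ((Equiv.Perm.sign σ : ℤ) : ℂ) := by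
    rw [map_mul]; push_cast; ring
  rw [h1, ← mul_assoc, h2, one_mul]

theorem bigOp_antisymmetrizer (T : H →ₗ[ℂ] H) (x : ⨂[ℂ] _ : Fin m, H) :
    bigOp T (antisymmetrizer H m x) = antisymmetrizer H m (bigOp T x) := by
  simp only [antisymmetrizer_apply, map_smul, map_sum]
  congr 1
  refine Finset.sum_congr rfl fun σ _ => ?_
  rw [permOp_bigOp]

end basic

section coeff
variable {H : Type*} [NormedAddCommGroup H] [InnerProductSpace ℂ H] {m n : ℕ}

/-- Coefficient functional extracting the coordinate of `⊗ᵢ u (f i)`. -/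
noncomputable def coeffFun (u : OrthonormalBasis (Fin n) ℂ H) (f : Fin m → Fin n) :
    (⨂[ℂ] _ : Fin m, H) →ₗ[ℂ] ℂ :=
  PiTensorProduct.lift ((MultilinearMap.mkPiAlgebra ℂ (Fin m) ℂ).compLinearMap
    (fun i => (innerSL ℂ (u (f i))).toLinearMap))

theorem coeffFun_tprod (u : OrthonormalBasis (Fin n) ℂ H) (f : Fin m → Fin n) (x : Fin m → H) :
    coeffFun u f (PiTensorProduct.tprod ℂ x) = ∏ i : Fin m, ⟪u (f i), x i⟫_ℂ := by
  simp [coeffFun]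

theorem coeffFun_reconstruct (u : OrthonormalBasis (Fin n) ℂ H) (x : ⨂[ℂ] _ : Fin m, H) :
    ∑ f : Fin m → Fin n, coeffFun u f x • PiTensorProduct.tprod ℂ (fun i => u (f i)) = x := by
  have : (∑ f : Fin m → Fin n,
      (coeffFun u f).smulRight (PiTensorProduct.tprod ℂ (fun i => u (f i))))
      = (LinearMap.id : (⨂[ℂ] _ : Fin m, H) →ₗ[ℂ] _) := by
    apply PiTensorProduct.ext
    ext y
    simp only [LinearMap.compMultilinearMap_apply, LinearMap.sum_apply,
      LinearMap.smulRight_apply, LinearMap.id_apply, coeffFun_tprod]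
    conv_rhs => rw [show y = fun i => ∑ j : Fin n, ⟪u j, y i⟫_ℂ • u j from
      funext fun i => (u.sum_repr' (y i)).symm]
    rw [MultilinearMap.map_sum]
    refine Finset.sum_congr rfl fun f _ => ?_
    rw [MultilinearMap.map_smul_univ]
  calc ∑ f : Fin m → Fin n, coeffFun u f x • PiTensorProduct.tprod ℂ (fun i => u (f i))
      = (∑ f : Fin m → Fin n,
        (coeffFun u f).smulRight (PiTensorProduct.tprod ℂ (fun i => u (f i)))) x := by
        simp [LinearMap.sum_apply]
    _ = x := by rw [this]; rfl

theorem exists_coeff_ne_zero (u : OrthonormalBasis (Fin n) ℂ H) {x : ⨂[ℂ] _ : Fin m, H}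
    (hx : x ≠ 0) : ∃ f : Fin m → Fin n, coeffFun u f x ≠ 0 := by
  by_contra h
  push_neg at h
  apply hx
  rw [← coeffFun_reconstruct u x]
  simp [h]

theorem coeffFun_permOp (u : OrthonormalBasis (Fin n) ℂ H) (f : Fin m → Fin n)
    (σ : Equiv.Perm (Fin m)) (x : ⨂[ℂ] _ : Fin m, H) :
    coeffFun u f (permOp σ x) = coeffFun u (f ∘ σ) x := by
  have : (coeffFun u f).comp (permOp σ) = (coeffFun u (f ∘ σ) :
      (⨂[ℂ] _ : Fin m, H) →ₗ[ℂ] ℂ) := by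
    apply PiTensorProduct.ext
    ext y
    simp only [LinearMap.compMultilinearMap_apply, LinearMap.comp_apply, permOp_tprod,
      coeffFun_tprod, Function.comp_apply]
    rw [← Equiv.prod_comp σ (fun i => ⟪u (f i), y (σ.symm i)⟫_ℂ)]
    exact Finset.prod_congr rfl fun i _ => by rw [Equiv.symm_apply_apply]
  exact congrFun (congrArg DFunLike.coe this) x

theorem coeffFun_bigOp (u : OrthonormalBasis (Fin n) ℂ H) (E : Fin n → ℝ)
    (T : H →ₗ[ℂ] H) (hT : LinearMap.IsSymmetric T)
    (hu : ∀ i, T (u i) = (E i : ℂ) • u i) (f : Fin m → Fin n) (x : ⨂[ℂ] _ : Fin m, H) :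
    coeffFun u f (bigOp T x) = (∑ k : Fin m, (E (f k) : ℂ)) * coeffFun u f x := by
  have key : ∀ (j : Fin n) (v : H), ⟪u j, T v⟫_ℂ = (E j : ℂ) * ⟪u j, v⟫_ℂ := by
    intro j v
    rw [← hT (u j) v, hu j, inner_smul_left, Complex.conj_ofReal]
  have : (coeffFun u f).comp (bigOp T) = ((∑ k : Fin m, (E (f k) : ℂ)) • coeffFun u f :
      (⨂[ℂ] _ : Fin m, H) →ₗ[ℂ] ℂ) := by
    apply PiTensorProduct.ext
    ext y
    simp only [LinearMap.compMultilinearMap_apply, LinearMap.comp_apply, bigOp_tprod,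
      map_sum, coeffFun_tprod, LinearMap.smul_apply, smul_eq_mul, Finset.sum_mul]
    refine Finset.sum_congr rfl fun k _ => ?_
    have : ∀ i : Fin m, ⟪u (f i), if i = k then T (y i) else y i⟫_ℂ
        = (if i = k then (E (f k) : ℂ) else 1) * ⟪u (f i), y i⟫_ℂ := by
      intro i
      by_cases h : i = k
      · subst h; simp [key]
      · simp [h]
    rw [Finset.prod_congr rfl (fun i _ => this i), Finset.prod_mul_distrib,
      Finset.prod_ite_eq' Finset.univ k (fun _ => (E (f k) : ℂ))]
    simp
  calc coeffFun u f (bigOp T x) = ((coeffFun u f).comp (bigOp T)) x := rfl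
    _ = _ := by rw [this]; simp

end coeff

section eigen
variable {H : Type*} [AddCommGroup H] [Module ℂ H] {m : ℕ}

theorem bigOp_tprod_eigen (T : H →ₗ[ℂ] H) (x : Fin m → H) (c : Fin m → ℂ)
    (h : ∀ i, T (x i) = c i • x i) :
    bigOp T (PiTensorProduct.tprod ℂ x) = (∑ i : Fin m, c i) • PiTensorProduct.tprod ℂ x := by
  rw [bigOp_tprod, Finset.sum_smul]
  refine Finset.sum_congr rfl fun k _ => ?_
  have h1 : (fun i => if i = k then T (x i) else x i) = Function.update x k (c k • x k) := by
    funext i; by_cases hik : i = k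
    · subst hik; simp [h]
    · simp [Function.update_apply, hik]
  rw [h1, MultilinearMap.map_update_smul, Function.update_eq_self]

end eigen

section comb

theorem strictMono_val_le {m n : ℕ} (g : Fin m → Fin n) (hg : StrictMono g) (k : Fin m) :
    (k : ℕ) ≤ (g k : ℕ) := by
  obtain ⟨j, hj⟩ := k
  induction j with
  | zero => exact Nat.zero_le _
  | succ j ih =>
    have hj' : j < m := Nat.lt_of_succ_lt hj
    have h1 : (g ⟨j, hj'⟩ : ℕ) < (g ⟨j + 1, hj⟩ : ℕ) := hg (by simp [Fin.lt_def])
    have h2 := ih hj'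
    simp only [Fin.val_mk] at h1 h2 ⊢
    omega

theorem sum_initial_le {n m : ℕ} (hm : m ≤ n) (E : Fin n → ℝ) (hE : Monotone E)
    (f : Fin m → Fin n) (hf : Function.Injective f) :
    ∑ k : Fin m, E (Fin.castLE hm k) ≤ ∑ k : Fin m, E (f k) := by
  classical
  set s : Finset (Fin n) := Finset.image f Finset.univ with hs
  have hcard : s.card = m := by
    rw [hs, Finset.card_image_of_injective _ hf, Finset.card_univ, Fintype.card_fin]
  have h2 : ∑ k : Fin m, E (f k) = ∑ a ∈ s, E a :=
    (Finset.sum_image (fun i _ j _ h => hf h)).symm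
  have h3 : ∑ a ∈ s, E a = ∑ k : Fin m, E (s.orderEmbOfFin hcard k) := by
    rw [← Finset.sum_attach s E]
    exact Fintype.sum_equiv (s.orderIsoOfFin hcard).toEquiv.symm _ _ (fun a => by
      rw [← Finset.coe_orderIsoOfFin_apply]
      simp)
  rw [h2, h3]
  refine Finset.sum_le_sum fun k _ => hE ?_
  have := strictMono_val_le _ (s.orderEmbOfFin hcard).strictMono k
  rw [Fin.le_def]
  simpa using this

end comb

theorem detState_coeff {H : Type*} [NormedAddCommGroup H] [InnerProductSpace ℂ H]
    {n m : ℕ} (hm : m ≤ n) (u : OrthonormalBasis (Fin n) ℂ H) :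
    coeffFun u (Fin.castLE hm) (detState (fun k : Fin m => u (Fin.castLE hm k)))
      = (m.factorial : ℂ)⁻¹ := by
  classical
  rw [detState, antisymmetrizer_apply, map_smul, map_sum]
  have hterm : ∀ σ : Equiv.Perm (Fin m),
      coeffFun u (Fin.castLE hm) ((((Equiv.Perm.sign σ : ℤ) : ℂ)) •
        permOp σ (PiTensorProduct.tprod ℂ (fun k : Fin m => u (Fin.castLE hm k))))
      = if σ = 1 then 1 else 0 := by
    intro σ
    rw [map_smul, permOp_tprod, coeffFun_tprod]
    by_cases hσ : σ = 1
    · subst hσ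
      simp [orthonormal_iff_ite.mp u.orthonormal, Equiv.Perm.one_symm]
    · obtain ⟨i, hi⟩ : ∃ i, σ i ≠ i := by
        by_contra h
        push_neg at h
        exact hσ (Equiv.ext h)
      have hj : σ.symm (σ i) ≠ σ i := by
        rw [Equiv.symm_apply_apply]
        exact fun h => hi h.symm
      rw [if_neg hσ]
      rw [Finset.prod_eq_zero (Finset.mem_univ (σ i)) ?_, smul_zero]
      rw [orthonormal_iff_ite.mp u.orthonormal, if_neg]
      intro h
      exact hj (Fin.castLE_injective hm h).symm
  rw [Finset.sum_congr rfl (fun σ _ => hterm σ)]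
  simp

/-- Let `Ĥ` be a self-adjoint operator on an `n`-dimensional space `H` with
eigenvalues `E₀ ≤ ⋯ ≤ E_{n-1}` (given by a monotone `E` with an orthonormal eigenbasis `u`),
let `m ≤ n`, and let `𝐇 = Σ_k 1⊗⋯⊗Ĥ⊗⋯⊗1` act on `H^{⊗m}`.  Then the antisymmetric subspace
`V₋(H^{⊗m})` is invariant under `𝐇`, the determinant state built from `u₀,…,u_{m-1}` lies in
`V₋`, is nonzero, and is an eigenvector of `𝐇` with eigenvalue `Σ_{k<m} E_k`; moreover every
eigenvalue `μ` of `𝐇` restricted to `V₋` satisfies `Σ_{k<m} E_k ≤ μ`, so `Σ_{k<m} E_k` is the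
smallest eigenvalue of the restriction. -/
theorem bigOp_antisymmetric_ground_energy
    {H : Type*} [NormedAddCommGroup H] [InnerProductSpace ℂ H] [FiniteDimensional ℂ H]
    {n m : ℕ} (hm : m ≤ n) (hn : Module.finrank ℂ H = n)
    (T : H →ₗ[ℂ] H) (hT : LinearMap.IsSymmetric T)
    (E : Fin n → ℝ) (hE : Monotone E)
    (u : OrthonormalBasis (Fin n) ℂ H)
    (hu : ∀ i, T (u i) = (E i : ℂ) • u i) :
    -- `V₋(H^{⊗m})` is invariant under `𝐇`
    (∀ x : ⨂[ℂ] _ : Fin m, H, IsAntisymmetric x → IsAntisymmetric (bigOp T x)) ∧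
    -- the determinant state of `u₀,…,u_{m-1}` lies in `V₋`, is nonzero, and attains the
    -- eigenvalue `Σ_{k=0}^{m-1} E_k`
    IsAntisymmetric (detState (fun k : Fin m => u (Fin.castLE hm k))) ∧
    detState (fun k : Fin m => u (Fin.castLE hm k)) ≠ 0 ∧
    bigOp T (detState (fun k : Fin m => u (Fin.castLE hm k)))
      = ((∑ k : Fin m, E (Fin.castLE hm k) : ℝ) : ℂ) •
          detState (fun k : Fin m => u (Fin.castLE hm k)) ∧
    -- `Σ_{k=0}^{m-1} E_k` is a lower bound on the eigenvalues of `𝐇` restricted to `V₋`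
    (∀ (μ : ℝ) (x : ⨂[ℂ] _ : Fin m, H), IsAntisymmetric x → x ≠ 0 →
      bigOp T x = (μ : ℂ) • x → (∑ k : Fin m, E (Fin.castLE hm k)) ≤ μ) := by
  classical
  refine ⟨?_, ?_, ?_, ?_, ?_⟩
  · intro x hx σ
    rw [permOp_bigOp, hx σ, map_smul]
  · intro σ
    exact permOp_antisymmetrizer σ _
  · intro h
    have := detState_coeff hm u
    rw [h, map_zero] at this
    exact (inv_ne_zero (by exact_mod_cast m.factorial_ne_zero)) this.symm
  · rw [detState, bigOp_antisymmetrizer,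
      bigOp_tprod_eigen T _ (fun k => ((E (Fin.castLE hm k) : ℂ))) (fun k => hu _),
      map_smul]
    rw [← detState]
    norm_cast
  · intro μ x hanti hx0 heig
    obtain ⟨f, hf⟩ := exists_coeff_ne_zero u hx0
    have hinj : Function.Injective f := by
      intro i j hij
      by_contra hne
      have hcomp : f ∘ (Equiv.swap i j) = f := by
        funext k
        rcases eq_or_ne k i with rfl | hki
        · simp [Equiv.swap_apply_left, hij]
        rcases eq_or_ne k j with rfl | hkj
        · simp [Equiv.swap_apply_right, hij]
        · simp [Equiv.swap_apply_of_ne_of_ne hki hkj]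
      have h1 : coeffFun u f x = -coeffFun u f x := by
        conv_lhs => rw [← hcomp, ← coeffFun_permOp, hanti (Equiv.swap i j),
          Equiv.Perm.sign_swap hne, map_smul]
        simp
      exact hf (by linear_combination h1 / 2)
    have h2 : (∑ k : Fin m, ((E (f k) : ℂ))) = (μ : ℂ) := by
      have h := coeffFun_bigOp u E T hT hu f x
      rw [heig, map_smul, smul_eq_mul] at h
      exact mul_right_cancel₀ hf h.symm
    have h3 : (∑ k : Fin m, E (f k) : ℝ) = μ := by exact_mod_cast h2
    rw [← h3]
    exact sum_initial_le hm E hE f hinj
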